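/- Defined pointwise on functions f : D → ]-∞,M[ with structuring function b : D → ]-∞,M[ over a finite domain D (an additive group), the logarithmic dilation δ_b(f)(x) = sup_h (f(x-h) ⊕ b(h)) and logarithmic erosion ε_b(f)(x) = inf_h (f(x+h) ⊖ b(h)) form an adjunction: δ_b(g) ≤ f if and only if g ≤ ε_b(f). -/
import Mathlib


noncomputable def lipAdd (M f g : ℝ) : ℝ := f + g - f * g / M

noncomputable def lipSub (M f g : ℝ) : ℝ := (f - g) / (1 - g / M)

/-- Logarithmic dilation: `δ_b(f)(x) = sup_h (f(x-h) ⊕ b(h))`. -/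
noncomputable def logDil (M : ℝ) {D : Type*} [Fintype D] [AddGroup D] [Nonempty D]
    (b f : D → ℝ) (x : D) : ℝ :=
  Finset.univ.sup' Finset.univ_nonempty (fun h => lipAdd M (f (x - h)) (b h))

/-- Logarithmic erosion: `ε_b(f)(x) = inf_h (f(x+h) ⊖ b(h))`. -/
noncomputable def logEro (M : ℝ) {D : Type*} [Fintype D] [AddGroup D] [Nonempty D]
    (b f : D → ℝ) (x : D) : ℝ :=
  Finset.univ.inf' Finset.univ_nonempty (fun h => lipSub M (f (x + h)) (b h))

/-- logarithmic dilation and erosion form an adjunction. -/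
theorem logDil_logEro_adjunction (M : ℝ) (hM : 0 < M) {D : Type*} [Fintype D]
    [AddGroup D] [Nonempty D] (b f g : D → ℝ)
    (hb : ∀ x, b x < M) (hf : ∀ x, f x < M) (hg : ∀ x, g x < M) :
    (∀ x, logDil M b g x ≤ f x) ↔ (∀ x, g x ≤ logEro M b f x) := by
  have key : ∀ (a c F : ℝ), c < M → (lipAdd M a c ≤ F ↔ a ≤ lipSub M F c) := by
    intro a c F hc
    have hpos : 0 < 1 - c / M := by
      have : c / M < 1 := (div_lt_one hM).mpr hc
      linarith
    rw [lipAdd, lipSub, le_div_iff₀ hpos]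
    have e : a * (1 - c / M) = a - a * c / M := by ring
    constructor <;> intro h <;> linarith
  constructor
  · intro h x
    rw [logEro, Finset.le_inf'_iff]
    intro y _
    rw [← key _ _ _ (hb y)]
    have := h (x + y)
    rw [logDil] at this
    have h2 := Finset.le_sup' (fun h => lipAdd M (g (x + y - h)) (b h)) (Finset.mem_univ y)
    simpa using le_trans h2 this
  · intro h x
    rw [logDil, Finset.sup'_le_iff]
    intro y _
    rw [key _ _ _ (hb y)]
    have := h (x - y)
    rw [logEro] at this
    have h2 := Finset.inf'_le (fun h => lipSub M (f (x - y + h)) (b h)) (Finset.mem_univ y)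
    simpa using le_trans this h2
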